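/- Let g ∈ C⁰([0,a]) be nonnegative with (r|w|)' ≤ ε|w| + Cr log(1/r) on (0,a) for a C¹ function w with w(0)=0 and 0 < ε < 1. Then |w(r)| ≤ (C/(2-ε))(r log(1/r) + r) for r ∈ (0,a). -/

import Mathlib

open Real Set

/-- Let `w` be C¹ on `[0,a]` with `w(0) = 0`, `a < 1`, `0 < ε < 1`,
`C > 0`. If the differential inequality `(r|w|)' ≤ ε|w| + C r log(1/r)` holds on
`(0,a)`, then `|w(r)| ≤ (C/(2-ε))(r log(1/r) + r)` for `r ∈ (0,a)`. -/
theorem stmt_18 (a ε C : ℝ) (ha0 : 0 < a) (ha1 : a < 1)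
    (hε0 : 0 < ε) (hε1 : ε < 1) (hC : 0 < C) (w : ℝ → ℝ)
    (hw : ContDiffOn ℝ 1 w (Set.Icc 0 a)) (hw0 : w 0 = 0)
    (hineq : ∃ d : ℝ → ℝ, ∀ r ∈ Set.Ioo 0 a,
      HasDerivAt (fun t => t * |w t|) (d r) r ∧
      d r ≤ ε * |w r| + C * r * Real.log (1 / r)) :
    ∀ r ∈ Set.Ioo 0 a, |w r| ≤ C / (2 - ε) * (r * Real.log (1 / r) + r) := by
  obtain ⟨d, hd⟩ := hineq
  have he0 : (0:ℝ) < 2 - ε := by linarith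
  have he1 : (1:ℝ) ≤ 2 - ε := by linarith
  set h : ℝ → ℝ := fun s => C/(2-ε) * (s ^ (2-ε) * Real.log (1/s))
      + C/(2-ε)^2 * s ^ (2-ε) - s ^ (-ε) * (s * |w s|) with hh
  -- derivative facts
  have key : ∀ s ∈ Ioo (0:ℝ) a, ∃ D, HasDerivAt h D s ∧ 0 ≤ D := by
    intro s hs
    obtain ⟨hs0, hsa⟩ := hs
    have hsne : s ≠ 0 := ne_of_gt hs0
    obtain ⟨hF, hdle⟩ := hd s ⟨hs0, hsa⟩
    have hlog : HasDerivAt (fun t : ℝ => Real.log (1/t)) (-s⁻¹) s := by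
      have heq : (fun t : ℝ => Real.log (1/t)) = fun t => -Real.log t := by
        funext t; rw [one_div, Real.log_inv]
      rw [heq]
      exact (Real.hasDerivAt_log hsne).neg
    have hpow1 : HasDerivAt (fun t : ℝ => t ^ (2-ε)) ((2-ε) * s ^ (2-ε-1)) s :=
      Real.hasDerivAt_rpow_const (Or.inl hsne)
    have hpow2 : HasDerivAt (fun t : ℝ => t ^ (-ε)) ((-ε) * s ^ (-ε-1)) s :=
      Real.hasDerivAt_rpow_const (Or.inl hsne)
    have hderiv : HasDerivAt h
        (C/(2-ε) * ((2-ε) * s ^ (2-ε-1) * Real.log (1/s) + s ^ (2-ε) * (-s⁻¹))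
          + C/(2-ε)^2 * ((2-ε) * s ^ (2-ε-1))
          - ((-ε) * s ^ (-ε-1) * (s * |w s|) + s ^ (-ε) * d s)) s := by
      rw [hh]
      exact (((hpow1.mul hlog).const_mul _).add (hpow1.const_mul _)).sub (hpow2.mul hF)
    refine ⟨_, hderiv, ?_⟩
    have h1 : s ^ ((2:ℝ)-ε-1) = s ^ (-ε) * s := by
      rw [show (2:ℝ)-ε-1 = -ε + 1 by ring, Real.rpow_add hs0, Real.rpow_one]
    have h2 : s ^ ((2:ℝ)-ε) = s ^ (-ε) * s * s := by
      rw [show (2:ℝ)-ε = -ε + 1 + 1 by ring, Real.rpow_add hs0, Real.rpow_add hs0,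
        Real.rpow_one]
    have h3 : s ^ (-ε-1) = s ^ (-ε) * s⁻¹ := by
      rw [show -ε-1 = -ε + (-1) by ring, Real.rpow_add hs0, Real.rpow_neg_one]
    have hDeq : C/(2-ε) * ((2-ε) * s ^ (2-ε-1) * Real.log (1/s) + s ^ (2-ε) * (-s⁻¹))
          + C/(2-ε)^2 * ((2-ε) * s ^ (2-ε-1))
          - ((-ε) * s ^ (-ε-1) * (s * |w s|) + s ^ (-ε) * d s)
        = s ^ (-ε) * s * ((ε * |w s| + C * s * Real.log (1/s)) - d s) / s := by
      rw [h1, h2, h3]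
      field_simp
      ring
    rw [hDeq]
    have hps : (0:ℝ) < s ^ (-ε) := Real.rpow_pos_of_pos hs0 _
    have : 0 ≤ (ε * |w s| + C * s * Real.log (1/s)) - d s := by linarith
    positivity
  -- monotonicity
  have hmono : MonotoneOn h (Ioo 0 a) := by
    apply monotoneOn_of_deriv_nonneg (convex_Ioo 0 a)
    · intro s hs
      exact ((key s hs).choose_spec.1.differentiableAt).continuousAt.continuousWithinAt
    · intro s hs
      rw [interior_Ioo] at hs
      exact ((key s hs).choose_spec.1.differentiableAt).differentiableWithinAt
    · intro s hs
      rw [interior_Ioo] at hs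
      obtain ⟨D, hD, hD0⟩ := key s hs
      rwa [hD.deriv]
  -- limit at 0
  have hlim : Filter.Tendsto h (nhdsWithin 0 (Ioi 0)) (nhds 0) := by
    have t1 : Filter.Tendsto (fun s : ℝ => C/(2-ε) * (s ^ (2-ε) * Real.log (1/s)))
        (nhdsWithin 0 (Ioi 0)) (nhds 0) := by
      have := (tendsto_log_mul_rpow_nhdsGT_zero he0).neg
      rw [neg_zero] at this
      have := this.const_mul (C/(2-ε))
      rw [mul_zero] at this
      refine this.congr fun s => ?_
      rw [one_div, Real.log_inv]; ring
    have t2 : Filter.Tendsto (fun s : ℝ => C/(2-ε)^2 * s ^ (2-ε))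
        (nhdsWithin 0 (Ioi 0)) (nhds 0) := by
      have : Filter.Tendsto (fun s : ℝ => s ^ (2-ε)) (nhdsWithin 0 (Ioi 0)) (nhds 0) := by
        have hc : ContinuousAt (fun s : ℝ => s ^ (2-ε)) 0 :=
          Real.continuousAt_rpow_const 0 (2-ε) (Or.inr he0.le)
        have := hc.tendsto.mono_left (nhdsWithin_le_nhds (s := Ioi 0))
        rwa [Real.zero_rpow he0.ne'] at this
      have := this.const_mul (C/(2-ε)^2)
      rwa [mul_zero] at this
    have t3 : Filter.Tendsto (fun s : ℝ => s ^ (-ε) * (s * |w s|))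
        (nhdsWithin 0 (Ioi 0)) (nhds 0) := by
      have hwcont : Filter.Tendsto (fun s => |w s|) (nhdsWithin 0 (Ioi 0)) (nhds 0) := by
        have hc : ContinuousWithinAt w (Icc 0 a) 0 :=
          (hw.continuousOn) 0 (by constructor <;> [rfl; exact ha0.le])
        have h1 : Filter.Tendsto w (nhdsWithin 0 (Ioo 0 a)) (nhds 0) := by
          have := hc.tendsto
          rw [hw0] at this
          exact this.mono_left (nhdsWithin_mono 0 Ioo_subset_Icc_self)
        rw [nhdsWithin_Ioo_eq_nhdsGT ha0] at h1
        have := h1.abs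
        rwa [abs_zero] at this
      have hp : Filter.Tendsto (fun s : ℝ => s ^ (1-ε)) (nhdsWithin 0 (Ioi 0)) (nhds 0) := by
        have hc : ContinuousAt (fun s : ℝ => s ^ (1-ε)) 0 :=
          Real.continuousAt_rpow_const 0 (1-ε) (Or.inr (by linarith))
        have := hc.tendsto.mono_left (nhdsWithin_le_nhds (s := Ioi 0))
        rwa [Real.zero_rpow (by linarith : (1:ℝ)-ε ≠ 0)] at this
      have := hp.mul hwcont
      rw [mul_zero] at this
      refine this.congr' ?_
      filter_upwards [self_mem_nhdsWithin] with s hs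
      have hs0 : (0:ℝ) < s := hs
      rw [show (1:ℝ)-ε = -ε + 1 by ring, Real.rpow_add hs0, Real.rpow_one]
      ring
    have := (t1.add t2).sub t3
    rw [add_zero, sub_zero] at this
    exact this.congr fun s => by rw [hh]
  -- conclusion
  intro r hr
  obtain ⟨hr0, hra⟩ := hr
  have hle : ∀ᶠ s in nhdsWithin 0 (Ioi 0), h s ≤ h r := by
    filter_upwards [Ioo_mem_nhdsGT hr0] with s hs
    exact hmono ⟨hs.1, hs.2.trans hra⟩ ⟨hr0, hra⟩ hs.2.le
  have hpos : 0 ≤ h r := le_of_tendsto hlim hle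
  rw [hh] at hpos
  simp only at hpos
  have h2 : r ^ ((2:ℝ)-ε) = r ^ (-ε) * r * r := by
    rw [show (2:ℝ)-ε = -ε + 1 + 1 by ring, Real.rpow_add hr0, Real.rpow_add hr0, Real.rpow_one]
  rw [h2] at hpos
  have hps : (0:ℝ) < r ^ (-ε) := Real.rpow_pos_of_pos hr0 _
  rw [← mul_le_mul_iff_right₀ (mul_pos hps hr0)]
  have hC2 : C/(2-ε)^2 ≤ C/(2-ε) := by
    rw [div_le_div_iff₀ (by positivity) he0]
    nlinarith [mul_le_mul_of_nonneg_left he1 (mul_pos hC he0).le]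
  have hkey : r ^ (-ε) * r * |w r| ≤ C/(2-ε) * (r ^ (-ε) * r * r * Real.log (1/r))
      + C/(2-ε)^2 * (r ^ (-ε) * r * r) := by nlinarith
  have hlast : C/(2-ε)^2 * (r ^ (-ε) * r * r) ≤ C/(2-ε) * (r ^ (-ε) * r * r) := by
    apply mul_le_mul_of_nonneg_right hC2
    positivity
  nlinarith
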